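/- arXiv:2509.21513 — 2 statements merged into one kernel-verified Lean document; each statement's English description precedes it below -/
import Mathlib

section
/- (Pathwise Grönwall perturbation bound.) Let u, v : [0,1] × ℝ^d → ℝ^d be time-dependent vector fields and L : [0,1] → [0,∞) an integrable function such that, for almost every t, x ↦ u(t,x) is L(t)-Lipschitz. Fix 0 ≤ s ≤ τ ≤ 1 and a point X ∈ ℝ^d, and let φ, ψ : [s,τ] → ℝ^d be absolutely continuous curves with φ(s) = ψ(s) = X solving φ'(t) = u(t, φ(t)) and ψ'(t) = v(t, ψ(t)) for almost every t. Define δ(t) := ‖u(t, ψ(t)) − v(t, ψ(t))‖. Then ‖φ(τ) − ψ(τ)‖ ≤ ∫_s^τ exp(∫_t^τ L(r) dr) · δ(t) dt. -/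
open MeasureTheory intervalIntegral

lemma key_swap {a b : ℝ} {f g : ℝ → ℝ}
    (hf : IntegrableOn f (Set.Ioc a b)) (hg : IntegrableOn g (Set.Ioc a b)) :
    ∫ y in Set.Ioc a b, (∫ x in Set.Ioc a y, f x) * g y
      = ∫ x in Set.Ioc a b, f x * (∫ y in Set.Ioc x b, g y) := by
  set μ := volume.restrict (Set.Ioc a b) with hμ
  have hbase : Integrable (fun p : ℝ × ℝ => f p.1 * g p.2) (μ.prod μ) :=
    hf.mul_prod hg
  have hS : MeasurableSet {p : ℝ × ℝ | p.1 ≤ p.2} :=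
    measurableSet_le measurable_fst measurable_snd
  have hint : Integrable (Function.uncurry fun x y : ℝ =>
      if x ≤ y then f x * g y else 0) (μ.prod μ) := by
    have heq : (Function.uncurry fun x y : ℝ => if x ≤ y then f x * g y else 0)
        = Set.indicator {p : ℝ × ℝ | p.1 ≤ p.2} (fun p => f p.1 * g p.2) := by
      ext p
      by_cases h : p.1 ≤ p.2 <;>
        simp [Function.uncurry, Set.indicator_apply, h]
    rw [heq]
    exact hbase.indicator hS
  have hswap := MeasureTheory.integral_integral_swap hint
  -- hswap : ∫ x, ∫ y, (if x ≤ y then f x * g y else 0) ∂μ ∂μ = ∫ y, ∫ x, ... ∂μ ∂μ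
  have hL : (∫ x, ∫ y, (if x ≤ y then f x * g y else 0) ∂μ ∂μ)
      = ∫ x in Set.Ioc a b, f x * (∫ y in Set.Ioc x b, g y) := by
    rw [hμ]
    refine setIntegral_congr_fun measurableSet_Ioc (fun x hx => ?_)
    have h1 : (fun y : ℝ => if x ≤ y then f x * g y else 0)
        = (Set.Ici x).indicator (fun y => f x * g y) := by
      ext y; by_cases h : x ≤ y <;> simp [Set.indicator_apply, h]
    rw [h1, MeasureTheory.integral_indicator measurableSet_Ici,
      Measure.restrict_restrict measurableSet_Ici]
    have h2 : Set.Ici x ∩ Set.Ioc a b = Set.Icc x b := by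
      ext y; simp only [Set.mem_inter_iff, Set.mem_Ici, Set.mem_Ioc, Set.mem_Icc]
      constructor
      · rintro ⟨h1, _, h3⟩; exact ⟨h1, h3⟩
      · rintro ⟨h1, h2⟩; exact ⟨h1, lt_of_lt_of_le hx.1 h1, h2⟩
    rw [h2, integral_Icc_eq_integral_Ioc, MeasureTheory.integral_const_mul]
  have hR : (∫ y, ∫ x, (if x ≤ y then f x * g y else 0) ∂μ ∂μ)
      = ∫ y in Set.Ioc a b, (∫ x in Set.Ioc a y, f x) * g y := by
    rw [hμ]
    refine setIntegral_congr_fun measurableSet_Ioc (fun y hy => ?_)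
    have h1 : (fun x : ℝ => if x ≤ y then f x * g y else 0)
        = (Set.Iic y).indicator (fun x => f x * g y) := by
      ext x; by_cases h : x ≤ y <;> simp [Set.indicator_apply, h]
    rw [h1, MeasureTheory.integral_indicator measurableSet_Iic,
      Measure.restrict_restrict measurableSet_Iic]
    have h2 : Set.Iic y ∩ Set.Ioc a b = Set.Ioc a y := by
      ext x; simp only [Set.mem_inter_iff, Set.mem_Iic, Set.mem_Ioc]
      constructor
      · rintro ⟨h1, h2, _⟩; exact ⟨h2, h1⟩
      · rintro ⟨h1, h2⟩; exact ⟨h2, h1, le_trans h2 hy.2⟩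
    rw [h2, MeasureTheory.integral_mul_const]
  rw [← hL, ← hR, hswap]

lemma II {E : Type*} [NormedAddCommGroup E] {a b : ℝ} (hab : a ≤ b) {f : ℝ → E} (hf : IntegrableOn f (Set.Icc a b)) :
    IntervalIntegrable f volume a b := by
  rw [← Set.uIcc_of_le hab] at hf
  exact hf.intervalIntegrable

lemma contOn_prim {E : Type*} [NormedAddCommGroup E] [NormedSpace ℝ E] {a b : ℝ} (hab : a ≤ b) {f : ℝ → E} (hf : IntegrableOn f (Set.Icc a b)) :
    ContinuousOn (fun t => ∫ x in a..t, f x) (Set.Icc a b) := by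
  have h := continuousOn_primitive_interval (μ := volume) (a := a) (b := b) (f := f)
    (by rwa [Set.uIcc_of_le hab])
  rwa [Set.uIcc_of_le hab] at h

lemma intOn_mul_left {a b : ℝ} {c h : ℝ → ℝ} (hc : ContinuousOn c (Set.Icc a b))
    (hh : IntegrableOn h (Set.Icc a b)) :
    IntegrableOn (fun y => c y * h y) (Set.Icc a b) := by
  obtain ⟨C, hC⟩ := (isCompact_Icc).exists_bound_of_continuousOn hc
  refine Integrable.bdd_mul (c := C) hh (hc.aestronglyMeasurable measurableSet_Icc) ?_
  filter_upwards [ae_restrict_mem measurableSet_Icc] with x hx using hC x hx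

lemma intOn_mul_right {a b : ℝ} {c h : ℝ → ℝ} (hh : IntegrableOn h (Set.Icc a b))
    (hc : ContinuousOn c (Set.Icc a b)) :
    IntegrableOn (fun y => h y * c y) (Set.Icc a b) :=
  ((intOn_mul_left hc hh) : Integrable _ _).congr (ae_of_all _ fun y => mul_comm (c y) (h y))

lemma ibp {a b : ℝ} (hab : a ≤ b) {f g F G : ℝ → ℝ} {c₁ c₂ : ℝ}
    (hf : IntegrableOn f (Set.Icc a b)) (hg : IntegrableOn g (Set.Icc a b))
    (hF : ∀ t ∈ Set.Icc a b, F t = c₁ + ∫ x in a..t, f x)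
    (hG : ∀ t ∈ Set.Icc a b, G t = c₂ + ∫ x in a..t, g x) :
    F b * G b = c₁ * c₂ + ∫ y in a..b, (F y * g y + f y * G y) := by
  set F₀ : ℝ → ℝ := fun t => ∫ x in a..t, f x with hF₀
  set G₀ : ℝ → ℝ := fun t => ∫ x in a..t, g x with hG₀
  have hf' : IntegrableOn f (Set.Ioc a b) := hf.mono_set Set.Ioc_subset_Icc_self
  have hg' : IntegrableOn g (Set.Ioc a b) := hg.mono_set Set.Ioc_subset_Icc_self
  have hfi : IntervalIntegrable f volume a b := II hab hf
  have hgi : IntervalIntegrable g volume a b := II hab hg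
  have hF₀g : IntegrableOn (fun y => F₀ y * g y) (Set.Icc a b) :=
    intOn_mul_left (contOn_prim hab hf) hg
  have hfG₀ : IntegrableOn (fun y => f y * G₀ y) (Set.Icc a b) :=
    intOn_mul_right hf (contOn_prim hab hg)
  -- core identity
  have core : (∫ y in Set.Ioc a b, F₀ y * g y) + (∫ y in Set.Ioc a b, f y * G₀ y)
      = F₀ b * G₀ b := by
    have step1 : (∫ y in Set.Ioc a b, F₀ y * g y)
        = ∫ x in Set.Ioc a b, f x * (G₀ b - G₀ x) := by
      rw [show (∫ y in Set.Ioc a b, F₀ y * g y)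
          = ∫ y in Set.Ioc a b, (∫ x in Set.Ioc a y, f x) * g y from
        setIntegral_congr_fun measurableSet_Ioc (fun y hy => by
          simp only [hF₀, integral_of_le hy.1.le])]
      rw [key_swap hf' hg']
      refine setIntegral_congr_fun measurableSet_Ioc (fun x hx => ?_)
      have : G₀ b - G₀ x = ∫ y in x..b, g y :=
        integral_interval_sub_left hgi (hgi.mono_set (by
          rw [Set.uIcc_of_le hab, Set.uIcc_of_le hx.1.le]
          exact Set.Icc_subset_Icc le_rfl hx.2))
      rw [this, integral_of_le hx.2]
    rw [step1]
    have hsub : (∫ x in Set.Ioc a b, f x * (G₀ b - G₀ x))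
        = (∫ x in Set.Ioc a b, f x * G₀ b) - ∫ x in Set.Ioc a b, f x * G₀ x := by
      rw [← integral_sub (hf'.mul_const _) (hfG₀.mono_set Set.Ioc_subset_Icc_self)]
      exact setIntegral_congr_fun measurableSet_Ioc (fun x _ => by ring)
    rw [hsub, MeasureTheory.integral_mul_const]
    have : (∫ x in Set.Ioc a b, f x) = F₀ b := by
      simp only [hF₀, integral_of_le hab]
    rw [this]
    ring
  -- assemble
  have hbmem : b ∈ Set.Icc a b := ⟨hab, le_rfl⟩
  rw [hF b hbmem, hG b hbmem]
  have hcongr : (∫ y in a..b, (F y * g y + f y * G y))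
      = ∫ y in Set.Ioc a b, (c₁ * g y + c₂ * f y + (F₀ y * g y + f y * G₀ y)) := by
    rw [integral_of_le hab]
    refine setIntegral_congr_fun measurableSet_Ioc (fun y hy => ?_)
    have hy' : y ∈ Set.Icc a b := Set.Ioc_subset_Icc_self hy
    rw [hF y hy', hG y hy']
    ring
  rw [hcongr]
  have i1 : IntegrableOn (fun y => c₁ * g y + c₂ * f y) (Set.Ioc a b) :=
    ((hg'.const_mul c₁).add (hf'.const_mul c₂))
  have i2 : IntegrableOn (fun y => F₀ y * g y + f y * G₀ y) (Set.Ioc a b) :=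
    (hF₀g.mono_set Set.Ioc_subset_Icc_self).add (hfG₀.mono_set Set.Ioc_subset_Icc_self)
  rw [integral_add i1 i2, integral_add (hg'.const_mul c₁) (hf'.const_mul c₂),
    integral_add (hF₀g.mono_set Set.Ioc_subset_Icc_self)
      (hfG₀.mono_set Set.Ioc_subset_Icc_self), core,
    MeasureTheory.integral_const_mul, MeasureTheory.integral_const_mul]
  have e1 : (∫ x in Set.Ioc a b, g x) = G₀ b := by simp only [hG₀, integral_of_le hab]
  have e2 : (∫ x in Set.Ioc a b, f x) = F₀ b := by simp only [hF₀, integral_of_le hab]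
  rw [e1, e2]
  ring

lemma prim_pow {a b : ℝ} (hab : a ≤ b) {L : ℝ → ℝ} (hL : IntegrableOn L (Set.Icc a b)) :
    ∀ k : ℕ, ∀ t ∈ Set.Icc a b,
      (∫ r in a..t, L r) ^ (k + 1)
        = ((k : ℝ) + 1) * ∫ r in a..t, L r * (∫ x in a..r, L x) ^ k := by
  intro k
  induction k with
  | zero => intro t ht; simp
  | succ k ih =>
    intro t ht
    have hat : a ≤ t := ht.1
    have hsub : Set.Icc a t ⊆ Set.Icc a b := Set.Icc_subset_Icc le_rfl ht.2
    have hLt : IntegrableOn L (Set.Icc a t) := hL.mono_set hsub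
    have hwc : ContinuousOn (fun r => ∫ x in a..r, L x) (Set.Icc a t) := contOn_prim hat hLt
    have hLwk : IntegrableOn (fun r => L r * (∫ x in a..r, L x) ^ k) (Set.Icc a t) :=
      intOn_mul_right hLt (hwc.pow k)
    have hGg : IntegrableOn
        (fun r => ((k : ℝ) + 1) * (L r * (∫ x in a..r, L x) ^ k)) (Set.Icc a t) :=
      hLwk.const_mul _
    have hibp := ibp hat (F := fun r => ∫ x in a..r, L x)
      (G := fun r => (∫ x in a..r, L x) ^ (k + 1)) (c₁ := (0 : ℝ)) (c₂ := (0 : ℝ))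
      hLt hGg
      (fun r _ => by simp)
      (fun r hr => by
        rw [zero_add, intervalIntegral.integral_const_mul]
        exact ih r (hsub hr))
    have hcong : (∫ y in a..t,
          ((∫ x in a..y, L x) * (((k : ℝ) + 1) * (L y * (∫ x in a..y, L x) ^ k))
            + L y * (∫ x in a..y, L x) ^ (k + 1)))
        = ∫ y in a..t, ((k : ℝ) + 2) * (L y * (∫ x in a..y, L x) ^ (k + 1)) := by
      refine intervalIntegral.integral_congr (fun y _ => ?_)
      ring
    rw [hcong, intervalIntegral.integral_const_mul] at hibp
    have hgoal : ((k : ℝ) + 1 + 1) = (k : ℝ) + 2 := by ring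
    push_cast
    rw [hgoal]
    calc (∫ r in a..t, L r) ^ (k + 1 + 1)
        = (∫ x in a..t, L x) * (∫ x in a..t, L x) ^ (k + 1) := by ring
      _ = ((k : ℝ) + 2) * ∫ r in a..t, L r * (∫ x in a..r, L x) ^ (k + 1) := by
          rw [hibp]; ring

lemma hasSum_exp_real (x : ℝ) :
    HasSum (fun n : ℕ => x ^ n / (n.factorial : ℝ)) (Real.exp x) := by
  rw [Real.exp_eq_exp_ℝ]
  exact NormedSpace.expSeries_div_hasSum_exp (𝔸 := ℝ) x

lemma prim_exp {a b : ℝ} (hab : a ≤ b) {L : ℝ → ℝ} (hL : IntegrableOn L (Set.Icc a b))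
    (hL0 : ∀ r ∈ Set.Icc a b, 0 ≤ L r) :
    ∀ t ∈ Set.Icc a b,
      Real.exp (-(∫ r in a..t, L r))
        = 1 - ∫ r in a..t, L r * Real.exp (-(∫ x in a..r, L x)) := by
  intro t ht
  have hat : a ≤ t := ht.1
  set w : ℝ → ℝ := fun r => ∫ x in a..r, L x with hw
  have hsub : Set.Icc a t ⊆ Set.Icc a b := Set.Icc_subset_Icc le_rfl ht.2
  have hLt : IntegrableOn L (Set.Icc a t) := hL.mono_set hsub
  have hwc : ContinuousOn w (Set.Icc a t) := contOn_prim hat hLt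
  have hw0 : ∀ r ∈ Set.Icc a t, 0 ≤ w r := fun r hr =>
    intervalIntegral.integral_nonneg hr.1
      (fun x hx => hL0 x ⟨hx.1, le_trans hx.2 (le_trans hr.2 ht.2)⟩)
  set Fk : ℕ → ℝ → ℝ := fun k r => L r * ((-1 : ℝ) ^ k * w r ^ k / (k.factorial : ℝ))
    with hFk
  have hFk_int : ∀ k, Integrable (Fk k) (volume.restrict (Set.Ioc a t)) := by
    intro k
    have h1 : IntegrableOn (fun r => L r * w r ^ k) (Set.Icc a t) :=
      intOn_mul_right hLt (hwc.pow k)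
    have h1' : IntegrableOn
        (fun r => ((-1 : ℝ) ^ k / (k.factorial : ℝ)) * (L r * w r ^ k)) (Set.Icc a t) :=
      h1.const_mul _
    have h2 : IntegrableOn
        (fun r => ((-1 : ℝ) ^ k / (k.factorial : ℝ)) * (L r * w r ^ k)) (Set.Ioc a t) :=
      h1'.mono_set Set.Ioc_subset_Icc_self
    exact h2.congr (ae_of_all _ fun r => by simp only [hFk]; ring)
  have key : ∀ k : ℕ, (∫ r, L r * w r ^ k ∂(volume.restrict (Set.Ioc a t))) = w t ^ (k + 1) / ((k : ℝ) + 1) := by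
    intro k
    have hp := prim_pow hab hL k t ht
    have hk : ((k : ℝ) + 1) ≠ 0 := by positivity
    rw [← integral_of_le hat, eq_div_iff hk, mul_comm]
    exact hp.symm
  have hnorm : ∀ k, (∫ r, ‖Fk k r‖ ∂(volume.restrict (Set.Ioc a t))) = w t ^ (k + 1) / (((k + 1).factorial : ℝ)) := by
    intro k
    have heq : ∀ r ∈ Set.Ioc a t,
        ‖Fk k r‖ = (1 / (k.factorial : ℝ)) * (L r * w r ^ k) := by
      intro r hr
      have hr' : r ∈ Set.Icc a t := Set.Ioc_subset_Icc_self hr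
      have h1 : 0 ≤ L r := hL0 r (hsub hr')
      have h2 : 0 ≤ w r := hw0 r hr'
      have h3 : (0 : ℝ) < (k.factorial : ℝ) := by positivity
      simp only [hFk, Real.norm_eq_abs, abs_mul, abs_div, abs_pow, abs_neg, abs_one,
        one_pow, one_mul, abs_of_nonneg h1, abs_of_nonneg h2, abs_of_pos h3]
      ring
    rw [setIntegral_congr_fun measurableSet_Ioc heq, MeasureTheory.integral_const_mul, key k]
    rw [Nat.factorial_succ]
    push_cast
    rw [mul_comm, mul_one_div, div_div]
  have hsum_norm : Summable (fun k => ∫ r, ‖Fk k r‖ ∂(volume.restrict (Set.Ioc a t))) := by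
    rw [funext hnorm]
    exact (summable_nat_add_iff 1).mpr (Real.summable_pow_div_factorial (w t))
  have hhs := hasSum_integral_of_summable_integral_norm hFk_int hsum_norm
  have hts : ∀ r ∈ Set.Ioc a t, (∑' k, Fk k r) = L r * Real.exp (-(w r)) := by
    intro r hr
    have h := hasSum_exp_real (-(w r))
    have h2 : (fun n : ℕ => (-(w r)) ^ n / (n.factorial : ℝ))
        = fun n : ℕ => (-1 : ℝ) ^ n * w r ^ n / (n.factorial : ℝ) := by
      funext n; rw [neg_pow]
    rw [h2] at h
    simp only [hFk]
    rw [tsum_mul_left, h.tsum_eq]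
  have hI : (∫ r, ∑' k, Fk k r ∂(volume.restrict (Set.Ioc a t))) = ∫ r in a..t, L r * Real.exp (-(w r)) := by
    rw [integral_of_le hat]
    exact setIntegral_congr_fun measurableSet_Ioc hts
  have hterm : ∀ k, (∫ r, Fk k r ∂(volume.restrict (Set.Ioc a t)))
      = -((-(w t)) ^ (k + 1) / (((k + 1).factorial : ℝ))) := by
    intro k
    have h5 : (∫ r, Fk k r ∂(volume.restrict (Set.Ioc a t)))
        = ((-1 : ℝ) ^ k / (k.factorial : ℝ)) * ∫ r, L r * w r ^ k ∂(volume.restrict (Set.Ioc a t)) := by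
      rw [← MeasureTheory.integral_const_mul]
      congr 1
      funext r
      simp only [hFk]; ring
    rw [h5, key k, neg_pow, Nat.factorial_succ, pow_succ]
    have h4 : (0:ℝ) < (k.factorial : ℝ) := by positivity
    have hk : ((k : ℝ) + 1) ≠ 0 := by positivity
    push_cast
    field_simp
    ring
  have h1 : HasSum (fun n : ℕ => (-(w t)) ^ (n + 1) / (((n + 1).factorial : ℝ)))
      (Real.exp (-(w t)) - 1) := by
    have h := (hasSum_nat_add_iff' (f := fun n : ℕ => (-(w t)) ^ n / (n.factorial : ℝ)) 1).mpr
      (hasSum_exp_real (-(w t)))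
    simpa using h
  have h2 : HasSum (fun n : ℕ => -((-(w t)) ^ (n + 1) / (((n + 1).factorial : ℝ))))
      (1 - Real.exp (-(w t))) := by
    simpa [neg_sub] using h1.neg
  have h3 : HasSum (fun k => ∫ r, Fk k r ∂(volume.restrict (Set.Ioc a t))) (1 - Real.exp (-(w t))) := by
    rw [funext hterm]; exact h2
  have hfinal : (1 : ℝ) - Real.exp (-(w t)) = ∫ r in a..t, L r * Real.exp (-(w r)) := by
    rw [← hI]
    exact h3.unique hhs
  rw [← hfinal]
  ring

lemma gronwall {a b : ℝ} (hab : a ≤ b) {L δ g : ℝ → ℝ}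
    (hL : IntegrableOn L (Set.Icc a b)) (hL0 : ∀ r ∈ Set.Icc a b, 0 ≤ L r)
    (hδ : IntegrableOn δ (Set.Icc a b))
    (hgc : ContinuousOn g (Set.Icc a b))
    (hg : ∀ t ∈ Set.Icc a b, g t ≤ ∫ r in a..t, (L r * g r + δ r)) :
    g b ≤ ∫ t in a..b, Real.exp (∫ r in t..b, L r) * δ t := by
  have hLg : IntegrableOn (fun r => L r * g r) (Set.Icc a b) := intOn_mul_right hL hgc
  have hh : IntegrableOn (fun r => L r * g r + δ r) (Set.Icc a b) := hLg.add hδ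
  have hwc : ContinuousOn (fun r => ∫ x in a..r, L x) (Set.Icc a b) := contOn_prim hab hL
  have hFc : ContinuousOn (fun r => Real.exp (-(∫ x in a..r, L x))) (Set.Icc a b) :=
    Real.continuous_exp.comp_continuousOn hwc.neg
  have hAc : ContinuousOn (fun t => ∫ r in a..t, (L r * g r + δ r)) (Set.Icc a b) :=
    contOn_prim hab hh
  have hLF : IntegrableOn (fun r => -(L r * Real.exp (-(∫ x in a..r, L x)))) (Set.Icc a b) :=
    (intOn_mul_right hL hFc).neg
  have hFprim : ∀ t ∈ Set.Icc a b, Real.exp (-(∫ x in a..t, L x))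
      = 1 + ∫ x in a..t, -(L x * Real.exp (-(∫ y in a..x, L y))) := by
    intro t ht
    rw [intervalIntegral.integral_neg, ← sub_eq_add_neg]
    exact prim_exp hab hL hL0 t ht
  have hibp := ibp hab (c₁ := (1 : ℝ)) (c₂ := (0 : ℝ)) hLF hh hFprim
    (fun t _ => by rw [zero_add])
  have int1 : IntegrableOn (fun y => Real.exp (-(∫ x in a..y, L x)) * (L y * g y + δ y)
      + (-(L y * Real.exp (-(∫ x in a..y, L x)))) * (∫ r in a..y, (L r * g r + δ r)))
      (Set.Icc a b) := (intOn_mul_left hFc hh).add (intOn_mul_right hLF hAc)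
  have int2 : IntegrableOn (fun y => Real.exp (-(∫ x in a..y, L x)) * δ y) (Set.Icc a b) :=
    intOn_mul_left hFc hδ
  have hmono : (∫ y in a..b, (Real.exp (-(∫ x in a..y, L x)) * (L y * g y + δ y)
        + (-(L y * Real.exp (-(∫ x in a..y, L x)))) * (∫ r in a..y, (L r * g r + δ r))))
      ≤ ∫ y in a..b, Real.exp (-(∫ x in a..y, L x)) * δ y := by
    refine intervalIntegral.integral_mono_on hab (II hab int1) (II hab int2) (fun y hy => ?_)
    have h1 : 0 ≤ L y := hL0 y hy
    have h2 : g y ≤ ∫ r in a..y, (L r * g r + δ r) := hg y hy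
    have h3 : (0:ℝ) < Real.exp (-(∫ x in a..y, L x)) := Real.exp_pos _
    nlinarith [mul_nonneg (mul_nonneg h3.le h1) (sub_nonneg.2 h2)]
  have hb : b ∈ Set.Icc a b := ⟨hab, le_rfl⟩
  have hexp1 : Real.exp (∫ x in a..b, L x)
      * (Real.exp (-(∫ x in a..b, L x)) * (∫ r in a..b, (L r * g r + δ r)))
      = ∫ r in a..b, (L r * g r + δ r) := by
    rw [← mul_assoc, ← Real.exp_add]
    simp
  have hfin : (∫ r in a..b, (L r * g r + δ r))
      ≤ Real.exp (∫ x in a..b, L x) * ∫ y in a..b, Real.exp (-(∫ x in a..y, L x)) * δ y := by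
    rw [← hexp1]
    refine mul_le_mul_of_nonneg_left ?_ (Real.exp_pos _).le
    rw [hibp]
    simpa using hmono
  have hconv : Real.exp (∫ x in a..b, L x)
      * (∫ y in a..b, Real.exp (-(∫ x in a..y, L x)) * δ y)
      = ∫ t in a..b, Real.exp (∫ r in t..b, L r) * δ t := by
    rw [← intervalIntegral.integral_const_mul]
    refine intervalIntegral.integral_congr (fun y hy => ?_)
    have hy' : y ∈ Set.Icc a b := by rwa [Set.uIcc_of_le hab] at hy
    have hay : IntervalIntegrable L volume a y :=
      (II hab hL).mono_set (by
        rw [Set.uIcc_of_le hab, Set.uIcc_of_le hy'.1]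
        exact Set.Icc_subset_Icc le_rfl hy'.2)
    have hsplit : (∫ r in y..b, L r) = (∫ r in a..b, L r) - ∫ r in a..y, L r :=
      (integral_interval_sub_left (II hab hL) hay).symm
    rw [hsplit, sub_eq_add_neg, Real.exp_add]
    ring
  calc g b ≤ ∫ r in a..b, (L r * g r + δ r) := hg b hb
    _ ≤ Real.exp (∫ x in a..b, L x)
        * ∫ y in a..b, Real.exp (-(∫ x in a..y, L x)) * δ y := hfin
    _ = ∫ t in a..b, Real.exp (∫ r in t..b, L r) * δ t := hconv


/-- **Pathwise Grönwall perturbation bound.**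
Let `u, v` be time-dependent vector fields with `x ↦ u(t,x)` `L(t)`-Lipschitz for a.e.
`t ∈ [0,1]` and `L` integrable.  If `φ, ψ` are absolutely continuous curves on `[s,τ]`
started at the same point `X`, solving `φ' = u(t,φ)` and `ψ' = v(t,ψ)` a.e. (encoded via
the integral equations), and `δ(t) := ‖u(t,ψ(t)) − v(t,ψ(t))‖`, then
`‖φ(τ) − ψ(τ)‖ ≤ ∫_s^τ exp(∫_t^τ L(r) dr) δ(t) dt`. -/
theorem pathwise_gronwall_perturbation {d : ℕ}
    (u v : ℝ → EuclideanSpace ℝ (Fin d) → EuclideanSpace ℝ (Fin d))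
    (L : ℝ → ℝ)
    (hL0 : ∀ r ∈ Set.Icc (0 : ℝ) 1, 0 ≤ L r)
    (hLint : IntegrableOn L (Set.Icc (0 : ℝ) 1))
    (hLip : ∀ᵐ t ∂(volume.restrict (Set.Icc (0 : ℝ) 1)),
      ∀ x y, ‖u t x - u t y‖ ≤ L t * ‖x - y‖)
    (s τ : ℝ) (hs : 0 ≤ s) (hsτ : s ≤ τ) (hτ : τ ≤ 1)
    (X : EuclideanSpace ℝ (Fin d))
    (φ ψ : ℝ → EuclideanSpace ℝ (Fin d))
    (hφs : φ s = X) (hψs : ψ s = X)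
    (hφint : IntervalIntegrable (fun t => u t (φ t)) volume s τ)
    (hψint : IntervalIntegrable (fun t => v t (ψ t)) volume s τ)
    (hφ : ∀ t ∈ Set.Icc s τ, φ t = X + ∫ r in s..t, u r (φ r))
    (hψ : ∀ t ∈ Set.Icc s τ, ψ t = X + ∫ r in s..t, v r (ψ r))
    (hδint : IntervalIntegrable (fun t => ‖u t (ψ t) - v t (ψ t)‖) volume s τ) :
    ‖φ τ - ψ τ‖ ≤
      ∫ t in s..τ, Real.exp (∫ r in t..τ, L r) * ‖u t (ψ t) - v t (ψ t)‖ := by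
  have hsub01 : Set.Icc s τ ⊆ Set.Icc (0:ℝ) 1 := Set.Icc_subset_Icc hs hτ
  have hL' : IntegrableOn L (Set.Icc s τ) := hLint.mono_set hsub01
  have hL0' : ∀ r ∈ Set.Icc s τ, 0 ≤ L r := fun r hr => hL0 r (hsub01 hr)
  have hδ' : IntegrableOn (fun t => ‖u t (ψ t) - v t (ψ t)‖) (Set.Icc s τ) := by
    rw [intervalIntegrable_iff', Set.uIcc_of_le hsτ] at hδint
    exact hδint
  have hφ' : IntegrableOn (fun t => u t (φ t)) (Set.Icc s τ) := by
    rw [intervalIntegrable_iff', Set.uIcc_of_le hsτ] at hφint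
    exact hφint
  have hψ' : IntegrableOn (fun t => v t (ψ t)) (Set.Icc s τ) := by
    rw [intervalIntegrable_iff', Set.uIcc_of_le hsτ] at hψint
    exact hψint
  have hφint' : IntervalIntegrable (fun t => u t (φ t)) volume s τ := II hsτ hφ'
  have hψint' : IntervalIntegrable (fun t => v t (ψ t)) volume s τ := II hsτ hψ'
  -- continuity of t ↦ ‖φ t - ψ t‖ on [s, τ]
  have hgc : ContinuousOn (fun t => ‖φ t - ψ t‖) (Set.Icc s τ) := by
    have hc1 := contOn_prim hsτ hφ'
    have hc2 := contOn_prim hsτ hψ'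
    refine ((hc1.sub hc2).norm).congr (fun t ht => ?_)
    rw [hφ t ht, hψ t ht]
    congr 1
    simp only [Pi.sub_apply]
    abel
  -- the basic integral inequality
  have hg : ∀ t ∈ Set.Icc s τ, ‖φ t - ψ t‖
      ≤ ∫ r in s..t, (L r * ‖φ r - ψ r‖ + ‖u r (ψ r) - v r (ψ r)‖) := by
    intro t ht
    have hst : s ≤ t := ht.1
    have hmono : Set.uIcc s t ⊆ Set.uIcc s τ := by
      rw [Set.uIcc_of_le hsτ, Set.uIcc_of_le hst]
      exact Set.Icc_subset_Icc le_rfl ht.2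
    have hφt : IntervalIntegrable (fun r => u r (φ r)) volume s t := hφint'.mono_set hmono
    have hψt : IntervalIntegrable (fun r => v r (ψ r)) volume s t := hψint'.mono_set hmono
    have heq : φ t - ψ t = ∫ r in s..t, (u r (φ r) - v r (ψ r)) := by
      rw [hφ t ht, hψ t ht, intervalIntegral.integral_sub hφt hψt]
      abel
    rw [heq]
    refine le_trans (intervalIntegral.norm_integral_le_integral_norm hst) ?_
    have ii1 : IntervalIntegrable (fun r => ‖u r (φ r) - v r (ψ r)‖) volume s t :=
      (hφt.sub hψt).norm
    have hLg : IntegrableOn (fun r => L r * ‖φ r - ψ r‖) (Set.Icc s τ) :=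
      intOn_mul_right hL' hgc
    have hsum : IntegrableOn
        (fun r => L r * ‖φ r - ψ r‖ + ‖u r (ψ r) - v r (ψ r)‖) (Set.Icc s τ) :=
      hLg.add hδ'
    have ii2 : IntervalIntegrable
        (fun r => L r * ‖φ r - ψ r‖ + ‖u r (ψ r) - v r (ψ r)‖) volume s t :=
      II hst (hsum.mono_set (Set.Icc_subset_Icc le_rfl ht.2))
    refine intervalIntegral.integral_mono_ae_restrict hst ii1 ii2 ?_
    have hae : ∀ᵐ r ∂(volume.restrict (Set.Icc s t)),
        ∀ x y, ‖u r x - u r y‖ ≤ L r * ‖x - y‖ :=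
      ae_restrict_of_ae_restrict_of_subset
        (Set.Icc_subset_Icc hs (le_trans ht.2 hτ)) hLip
    filter_upwards [hae] with r hr
    calc ‖u r (φ r) - v r (ψ r)‖
        ≤ ‖u r (φ r) - u r (ψ r)‖ + ‖u r (ψ r) - v r (ψ r)‖ :=
          norm_sub_le_norm_sub_add_norm_sub _ _ _
      _ ≤ L r * ‖φ r - ψ r‖ + ‖u r (ψ r) - v r (ψ r)‖ := by
          have := hr (φ r) (ψ r)
          linarith
  exact gronwall hsτ hL' hL0' hδ' hgc hg
end

section
/- Let Φ, Ψ : ℝ^d → ℝ^d be measurable maps with Φ Lipschitz of constant Lip(Φ), and let μ, ν be Borel probability measures on ℝ^d with finite second moment such that ∫ ‖Φ(x)‖² dν(x) < ∞ and ∫ ‖Ψ(x)‖² dν(x) < ∞. Then W₂(Φ_#μ, Ψ_#ν) ≤ Lip(Φ) · W₂(μ, ν) + (∫ ‖Φ(X) − Ψ(X)‖² dν(X))^{1/2}. -/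
open MeasureTheory ENNReal NNReal

/-- The quadratic Wasserstein distance, defined as the infimum over couplings of the
square root of the transport cost `∫ ‖x − y‖² dπ`. -/
noncomputable def W2 {E : Type*} [MeasurableSpace E] [NormedAddCommGroup E]
    (μ ν : Measure E) : ℝ≥0∞ :=
  ⨅ (π : Measure (E × E)) (_ : π.map Prod.fst = μ) (_ : π.map Prod.snd = ν),
    (∫⁻ p, (‖p.1 - p.2‖₊ : ℝ≥0∞) ^ 2 ∂π) ^ (1 / 2 : ℝ)

/-- **Combined contraction-plus-coupling bound.**
For a `K`-Lipschitz map `Φ` and a measurable map `Ψ`, both square integrable with respect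
to `ν`, and Borel probability measures `μ, ν` with finite second moment,
`W₂(Φ_#μ, Ψ_#ν) ≤ K ⬝ W₂(μ, ν) + (∫ ‖Φ(X) − Ψ(X)‖² dν(X))^{1/2}`. -/
theorem W2_map_le_lipschitz_add_L2 {d : ℕ} (K : ℝ≥0)
    (Φ Ψ : EuclideanSpace ℝ (Fin d) → EuclideanSpace ℝ (Fin d))
    (hΦ : LipschitzWith K Φ) (hΨ : Measurable Ψ)
    (μ ν : Measure (EuclideanSpace ℝ (Fin d)))
    [IsProbabilityMeasure μ] [IsProbabilityMeasure ν]
    (hμ2 : ∫⁻ x, (‖x‖₊ : ℝ≥0∞) ^ 2 ∂μ < ⊤)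
    (hν2 : ∫⁻ x, (‖x‖₊ : ℝ≥0∞) ^ 2 ∂ν < ⊤)
    (hΦ2 : ∫⁻ x, (‖Φ x‖₊ : ℝ≥0∞) ^ 2 ∂ν < ⊤)
    (hΨ2 : ∫⁻ x, (‖Ψ x‖₊ : ℝ≥0∞) ^ 2 ∂ν < ⊤) :
    W2 (μ.map Φ) (ν.map Ψ) ≤
      (K : ℝ≥0∞) * W2 μ ν + (∫⁻ x, (‖Φ x - Ψ x‖₊ : ℝ≥0∞) ^ 2 ∂ν) ^ (1 / 2 : ℝ) := by
  classical
  have hΦm : Measurable Φ := hΦ.continuous.measurable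
  set C : ℝ≥0∞ := (∫⁻ x, (‖Φ x - Ψ x‖₊ : ℝ≥0∞) ^ 2 ∂ν) ^ (1 / 2 : ℝ) with hC
  -- the key estimate for a single coupling
  have key : ∀ π : Measure ((EuclideanSpace ℝ (Fin d) × EuclideanSpace ℝ (Fin d))), π.map Prod.fst = μ → π.map Prod.snd = ν →
      W2 (μ.map Φ) (ν.map Ψ) ≤
        (K : ℝ≥0∞) * (∫⁻ p, (‖p.1 - p.2‖₊ : ℝ≥0∞) ^ 2 ∂π) ^ (1 / 2 : ℝ) + C := by
    intro π h1 h2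
    set T : EuclideanSpace ℝ (Fin d) × EuclideanSpace ℝ (Fin d) → EuclideanSpace ℝ (Fin d) × EuclideanSpace ℝ (Fin d) := fun p => (Φ p.1, Ψ p.2) with hTdef
    have hTm : Measurable T := by
      exact (hΦm.comp measurable_fst).prodMk (hΨ.comp measurable_snd)
    have hm1 : (π.map T).map Prod.fst = μ.map Φ := by
      rw [Measure.map_map measurable_fst hTm, ← h1, Measure.map_map hΦm measurable_fst]
      rfl
    have hm2 : (π.map T).map Prod.snd = ν.map Ψ := by
      rw [Measure.map_map measurable_snd hTm, ← h2, Measure.map_map hΨ measurable_snd]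
      rfl
    have hcostm : Measurable fun p : (EuclideanSpace ℝ (Fin d) × EuclideanSpace ℝ (Fin d)) => (‖p.1 - p.2‖₊ : ℝ≥0∞) ^ 2 :=
      ((measurable_fst.sub measurable_snd).nnnorm.coe_nnreal_ennreal).pow_const 2
    have hstep1 : W2 (μ.map Φ) (ν.map Ψ) ≤
        (∫⁻ p, (‖p.1 - p.2‖₊ : ℝ≥0∞) ^ 2 ∂(π.map T)) ^ (1 / 2 : ℝ) := by
      unfold W2
      exact iInf_le_of_le (π.map T) (iInf_le_of_le hm1 (iInf_le _ hm2))
    have hint : ∫⁻ p, (‖p.1 - p.2‖₊ : ℝ≥0∞) ^ 2 ∂(π.map T)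
        = ∫⁻ p, (‖Φ p.1 - Ψ p.2‖₊ : ℝ≥0∞) ^ 2 ∂π := by
      rw [lintegral_map hcostm hTm]
    set f : (EuclideanSpace ℝ (Fin d) × EuclideanSpace ℝ (Fin d)) → ℝ≥0∞ := fun p => (K : ℝ≥0∞) * (‖p.1 - p.2‖₊ : ℝ≥0∞) with hfdef
    set g : (EuclideanSpace ℝ (Fin d) × EuclideanSpace ℝ (Fin d)) → ℝ≥0∞ := fun p => (‖Φ p.2 - Ψ p.2‖₊ : ℝ≥0∞) with hgdef
    have hfmeas : AEMeasurable f π := by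
      exact (measurable_const.mul
        ((measurable_fst.sub measurable_snd).nnnorm.coe_nnreal_ennreal)).aemeasurable
    have hgmeas : AEMeasurable g π := by
      exact (((hΦm.comp measurable_snd).sub (hΨ.comp measurable_snd)).nnnorm.coe_nnreal_ennreal).aemeasurable
    have hpt : ∀ p : (EuclideanSpace ℝ (Fin d) × EuclideanSpace ℝ (Fin d)), (‖Φ p.1 - Ψ p.2‖₊ : ℝ≥0∞) ≤ f p + g p := by
      intro p
      simp only [hfdef, hgdef, ← enorm_eq_nnnorm, ← edist_eq_enorm_sub]
      calc edist (Φ p.1) (Ψ p.2) ≤ edist (Φ p.1) (Φ p.2) + edist (Φ p.2) (Ψ p.2) :=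
            edist_triangle _ _ _
        _ ≤ (K : ℝ≥0∞) * edist p.1 p.2 + edist (Φ p.2) (Ψ p.2) :=
            add_le_add_left (hΦ.edist_le_mul _ _) _
    have hmono : ∫⁻ p, (‖Φ p.1 - Ψ p.2‖₊ : ℝ≥0∞) ^ 2 ∂π ≤ ∫⁻ p, (f p + g p) ^ 2 ∂π :=
      lintegral_mono fun p => pow_le_pow_left₀ zero_le (hpt p) 2
    have mink := ENNReal.lintegral_Lp_add_le hfmeas hgmeas (one_le_two (α := ℝ))
    simp only [show (2 : ℝ) = ((2 : ℕ) : ℝ) by norm_num, ENNReal.rpow_natCast] at mink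
    have hf2 : (∫⁻ p, f p ^ 2 ∂π) ^ (1 / 2 : ℝ)
        = (K : ℝ≥0∞) * (∫⁻ p, (‖p.1 - p.2‖₊ : ℝ≥0∞) ^ 2 ∂π) ^ (1 / 2 : ℝ) := by
      have : ∀ p : (EuclideanSpace ℝ (Fin d) × EuclideanSpace ℝ (Fin d)), f p ^ 2 = (K : ℝ≥0∞) ^ 2 * (‖p.1 - p.2‖₊ : ℝ≥0∞) ^ 2 := by
        intro p; simp [hfdef, mul_pow]
      simp_rw [this]
      rw [lintegral_const_mul _ hcostm,
        ENNReal.mul_rpow_of_nonneg _ _ (by norm_num : (0 : ℝ) ≤ 1 / 2)]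
      congr 1
      rw [← ENNReal.rpow_natCast (K : ℝ≥0∞) 2, ← ENNReal.rpow_mul]
      norm_num
    have hg2 : ∫⁻ p, g p ^ 2 ∂π = ∫⁻ x, (‖Φ x - Ψ x‖₊ : ℝ≥0∞) ^ 2 ∂ν := by
      rw [← h2, lintegral_map (f := fun x => (‖Φ x - Ψ x‖₊ : ℝ≥0∞) ^ 2)
        (((hΦm.sub hΨ).nnnorm.coe_nnreal_ennreal).pow_const 2) measurable_snd]
    calc W2 (μ.map Φ) (ν.map Ψ)
        ≤ (∫⁻ p, (‖p.1 - p.2‖₊ : ℝ≥0∞) ^ 2 ∂(π.map T)) ^ (1 / 2 : ℝ) := hstep1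
      _ = (∫⁻ p, (‖Φ p.1 - Ψ p.2‖₊ : ℝ≥0∞) ^ 2 ∂π) ^ (1 / 2 : ℝ) := by rw [hint]
      _ ≤ (∫⁻ p, (f p + g p) ^ 2 ∂π) ^ (1 / 2 : ℝ) :=
          ENNReal.rpow_le_rpow hmono (by norm_num)
      _ ≤ (∫⁻ p, f p ^ 2 ∂π) ^ (1 / 2 : ℝ) + (∫⁻ p, g p ^ 2 ∂π) ^ (1 / 2 : ℝ) := mink
      _ = (K : ℝ≥0∞) * (∫⁻ p, (‖p.1 - p.2‖₊ : ℝ≥0∞) ^ 2 ∂π) ^ (1 / 2 : ℝ) + C := by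
          rw [hf2, hg2]
  -- rewrite `W2 μ ν` as an infimum over the (nonempty) subtype of couplings
  have hS : Nonempty {π : Measure ((EuclideanSpace ℝ (Fin d) × EuclideanSpace ℝ (Fin d))) // π.map Prod.fst = μ ∧ π.map Prod.snd = ν} := by
    refine ⟨⟨μ.prod ν, ?_, ?_⟩⟩
    · simp [Measure.map_fst_prod]
    · simp [Measure.map_snd_prod]
  have hW : W2 μ ν = ⨅ p : {π : Measure ((EuclideanSpace ℝ (Fin d) × EuclideanSpace ℝ (Fin d))) // π.map Prod.fst = μ ∧ π.map Prod.snd = ν},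
      (∫⁻ q, (‖q.1 - q.2‖₊ : ℝ≥0∞) ^ 2 ∂(p.1)) ^ (1 / 2 : ℝ) := by
    unfold W2
    apply le_antisymm
    · exact le_iInf fun p => iInf_le_of_le p.1 (iInf_le_of_le p.2.1 (iInf_le _ p.2.2))
    · exact le_iInf fun π => le_iInf fun h1 => le_iInf fun h2 => iInf_le _ (⟨π, h1, h2⟩ : {π : Measure ((EuclideanSpace ℝ (Fin d) × EuclideanSpace ℝ (Fin d))) // π.map Prod.fst = μ ∧ π.map Prod.snd = ν})
  rw [hW, ENNReal.mul_iInf (fun h => absurd h ENNReal.coe_ne_top), ENNReal.iInf_add]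
  exact le_iInf fun p => key p.1 p.2.1 p.2.2
end
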